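/- Every reticulation-visible phylogenetic network on X with m = |X| ≥ 2 leaves has at most 4m − 4 tree vertices (vertices of in-degree one and out-degree two), counting the root as a tree-like vertex among the non-leaf, non-reticulation vertices. -/

import Mathlib

/-- A directed graph with a distinguished vertex set, arc set and root,
intended to model (binary) phylogenetic networks. Since arcs form a
`Finset` of ordered pairs, there are no parallel arcs. -/
structure Net (V : Type) [DecidableEq V] where
  verts : Finset V
  arcs : Finset (V × V)
  root : V

variable {V : Type} [DecidableEq V]

namespace Net

def Arc (N : Net V) (u v : V) : Prop := (u, v) ∈ N.arcs

def outdeg (N : Net V) (v : V) : ℕ := (N.arcs.filter (fun e => e.1 = v)).card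

def indeg (N : Net V) (v : V) : ℕ := (N.arcs.filter (fun e => e.2 = v)).card

def IsLeaf (N : Net V) (v : V) : Prop := v ∈ N.verts ∧ N.outdeg v = 0

def IsRetic (N : Net V) (v : V) : Prop :=
  v ∈ N.verts ∧ N.indeg v = 2 ∧ N.outdeg v = 1

def IsTreeVtx (N : Net V) (v : V) : Prop :=
  v ∈ N.verts ∧ N.indeg v = 1 ∧ N.outdeg v = 2

/-- The set of leaves (out-degree-zero vertices); this is the taxa set `X`. -/
def leaves (N : Net V) : Finset V := N.verts.filter (fun v => N.outdeg v = 0)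

/-- The set of reticulation vertices. -/
def retics (N : Net V) : Finset V :=
  N.verts.filter (fun v => N.indeg v = 2 ∧ N.outdeg v = 1)

/-- `u` is an ancestor of `v`: there is a directed path from `u` to `v`.
(Reflexive, as in the reachability order.) -/
def Ancestor (N : Net V) (u v : V) : Prop := Relation.ReflTransGen N.Arc u v

/-- `IsPathList N u v l` : `l` is the list of vertices of a directed path
from `u` to `v` in `N`. -/
inductive IsPathList (N : Net V) : V → V → List V → Prop
  | nil (v : V) : IsPathList N v v [v]
  | cons {u w x : V} {l : List V} : N.Arc u w → IsPathList N w x l →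
      IsPathList N u x (u :: l)

/-- The leaf `ℓ` verifies the vertex `v`: every directed path from the root
to `ℓ` passes through `v`. -/
def Verifies (N : Net V) (ℓ v : V) : Prop :=
  ∀ l : List V, N.IsPathList N.root ℓ l → v ∈ l

def Visible (N : Net V) (v : V) : Prop := ∃ ℓ, N.IsLeaf ℓ ∧ N.Verifies ℓ v

def ReticVisible (N : Net V) : Prop := ∀ v, N.IsRetic v → N.Visible v

/-- `N` is a (binary) phylogenetic network: a rooted acyclic digraph with no
parallel arcs in which the root has in-degree zero and out-degree two, every
other vertex is a leaf (in-degree one, out-degree zero), a tree vertex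
(in-degree one, out-degree two) or a reticulation (in-degree two, out-degree
one); if there is a single vertex the network has no arcs. -/
def IsPhylo (N : Net V) : Prop :=
  N.root ∈ N.verts ∧
  (∀ e ∈ N.arcs, e.1 ∈ N.verts ∧ e.2 ∈ N.verts) ∧
  (∀ v : V, ¬ Relation.TransGen N.Arc v v) ∧
  (∀ v ∈ N.verts, N.Ancestor N.root v) ∧
  (if N.verts.card = 1 then N.arcs = ∅
   else
    N.indeg N.root = 0 ∧ N.outdeg N.root = 2 ∧
    ∀ v ∈ N.verts, v ≠ N.root →
      (N.indeg v = 1 ∧ N.outdeg v = 0) ∨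
      (N.indeg v = 1 ∧ N.outdeg v = 2) ∨
      (N.indeg v = 2 ∧ N.outdeg v = 1))

end Net

namespace Net

variable {V : Type} [DecidableEq V] {N : Net V}

attribute [local instance] Classical.propDecidable

/-! ### Path list basics -/

lemma IsPathList.head_eq {u v : V} {l : List V} (h : N.IsPathList u v l) :
    ∃ t, l = u :: t := by cases h <;> exact ⟨_, rfl⟩

lemma IsPathList.append_arc {u v w : V} {l : List V}
    (h : N.IsPathList u v l) (ha : N.Arc v w) : N.IsPathList u w (l ++ [w]) := by
  induction h with
  | nil x => exact .cons ha (.nil _)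
  | cons h1 _ ih => exact .cons h1 (ih ha)

lemma exists_pathList {u v : V} (h : N.Ancestor u v) : ∃ l, N.IsPathList u v l := by
  induction h with
  | refl => exact ⟨[u], .nil u⟩
  | tail _ h2 ih => obtain ⟨l, hl⟩ := ih; exact ⟨l ++ [_], hl.append_arc h2⟩

lemma IsPathList.suffix_from {u v x : V} {l : List V}
    (h : N.IsPathList u v l) (hx : x ∈ l) : ∃ l', N.IsPathList x v l' := by
  induction h with
  | nil w =>
    rcases List.mem_singleton.1 hx with rfl
    exact ⟨[x], .nil x⟩
  | cons h1 hp ih =>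
    rcases List.mem_cons.1 hx with rfl | hx'
    · exact ⟨_, .cons h1 hp⟩
    · exact ih hx'

lemma IsPathList.ancestor_of_mem {u v x : V} {l : List V}
    (h : N.IsPathList u v l) (hx : x ∈ l) : N.Ancestor u x := by
  induction h with
  | nil w =>
    rcases List.mem_singleton.1 hx with rfl
    exact Relation.ReflTransGen.refl
  | cons h1 hp ih =>
    rcases List.mem_cons.1 hx with rfl | hx'
    · exact Relation.ReflTransGen.refl
    · exact Relation.ReflTransGen.head h1 (ih hx')

lemma IsPathList.toAncestor {u v : V} {l : List V} (h : N.IsPathList u v l) :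
    N.Ancestor u v := by
  induction h with
  | nil w => exact Relation.ReflTransGen.refl
  | cons h1 _ ih => exact Relation.ReflTransGen.head h1 ih

lemma IsPathList.glue {a b d : V} {l1 l2 : List V}
    (h1 : N.IsPathList a b l1) (h2 : N.IsPathList b d l2) :
    N.IsPathList a d (l1 ++ l2.tail) := by
  induction h1 with
  | nil v =>
    cases h2 with
    | nil => simpa using IsPathList.nil _
    | cons hb hp => simpa using IsPathList.cons hb hp
  | cons ha hp ih => exact .cons ha (ih h2)

/-! ### Degree basics -/

lemma arc_of_outdeg_pos {v : V} (h : N.outdeg v ≠ 0) : ∃ w, N.Arc v w := by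
  have : (N.arcs.filter (fun e => e.1 = v)).Nonempty := by
    rw [← Finset.card_pos]; exact Nat.pos_of_ne_zero h
  obtain ⟨e, he⟩ := this
  rw [Finset.mem_filter] at he
  exact ⟨e.2, by rw [Arc, ← he.2]; exact he.1⟩

lemma arc_out_unique {v a b : V} (h : N.outdeg v = 1) (ha : N.Arc v a) (hb : N.Arc v b) :
    a = b := by
  rw [outdeg, Finset.card_eq_one] at h
  obtain ⟨e, he⟩ := h
  have h1 : (v, a) ∈ N.arcs.filter (fun e => e.1 = v) := by
    rw [Finset.mem_filter]; exact ⟨ha, rfl⟩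
  have h2 : (v, b) ∈ N.arcs.filter (fun e => e.1 = v) := by
    rw [Finset.mem_filter]; exact ⟨hb, rfl⟩
  rw [he, Finset.mem_singleton] at h1 h2
  exact congrArg Prod.snd (h1.trans h2.symm)

lemma no_arc_of_outdeg_zero {v w : V} (h : N.outdeg v = 0) : ¬ N.Arc v w := by
  intro ha
  have : (v, w) ∈ N.arcs.filter (fun e => e.1 = v) := by
    rw [Finset.mem_filter]; exact ⟨ha, rfl⟩
  rw [outdeg, Finset.card_eq_zero] at h
  simp [h] at this

lemma no_arc_of_indeg_zero {v w : V} (h : N.indeg v = 0) : ¬ N.Arc w v := by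
  intro ha
  have : (w, v) ∈ N.arcs.filter (fun e => e.2 = v) := by
    rw [Finset.mem_filter]; exact ⟨ha, rfl⟩
  rw [indeg, Finset.card_eq_zero] at h
  simp [h] at this

lemma parent_unique {v a b : V} (h : N.indeg v = 1) (ha : N.Arc a v) (hb : N.Arc b v) :
    a = b := by
  rw [indeg, Finset.card_eq_one] at h
  obtain ⟨e, he⟩ := h
  have h1 : (a, v) ∈ N.arcs.filter (fun e => e.2 = v) := by
    rw [Finset.mem_filter]; exact ⟨ha, rfl⟩
  have h2 : (b, v) ∈ N.arcs.filter (fun e => e.2 = v) := by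
    rw [Finset.mem_filter]; exact ⟨hb, rfl⟩
  rw [he, Finset.mem_singleton] at h1 h2
  exact congrArg Prod.fst (h1.trans h2.symm)

lemma parent_exists {v : V} (h : N.indeg v ≠ 0) : ∃ p, N.Arc p v := by
  have : (N.arcs.filter (fun e => e.2 = v)).Nonempty := by
    rw [← Finset.card_pos]; exact Nat.pos_of_ne_zero h
  obtain ⟨e, he⟩ := this
  rw [Finset.mem_filter] at he
  exact ⟨e.1, by rw [Arc, ← he.2]; exact he.1⟩

lemma two_children {v : V} (h : N.outdeg v = 2) :
    ∃ a b, a ≠ b ∧ N.Arc v a ∧ N.Arc v b ∧ ∀ x, N.Arc v x → x = a ∨ x = b := by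
  rw [outdeg, Finset.card_eq_two] at h
  obtain ⟨e, f, hef, hs⟩ := h
  have he : e ∈ N.arcs.filter (fun e => e.1 = v) := by rw [hs]; simp
  have hf : f ∈ N.arcs.filter (fun e => e.1 = v) := by rw [hs]; simp
  rw [Finset.mem_filter] at he hf
  refine ⟨e.2, f.2, ?_, ?_, ?_, ?_⟩
  · intro hq
    exact hef (Prod.ext (he.2.trans hf.2.symm) hq)
  · rw [Arc, ← he.2]; exact he.1
  · rw [Arc, ← hf.2]; exact hf.1
  · intro x hx
    have : (v, x) ∈ N.arcs.filter (fun e => e.1 = v) := by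
      rw [Finset.mem_filter]; exact ⟨hx, rfl⟩
    rw [hs, Finset.mem_insert, Finset.mem_singleton] at this
    rcases this with rfl | rfl
    · exact Or.inl rfl
    · exact Or.inr rfl

lemma two_parents {v : V} (h : N.indeg v = 2) :
    ∃ a b, a ≠ b ∧ N.Arc a v ∧ N.Arc b v ∧ ∀ x, N.Arc x v → x = a ∨ x = b := by
  rw [indeg, Finset.card_eq_two] at h
  obtain ⟨e, f, hef, hs⟩ := h
  have he : e ∈ N.arcs.filter (fun e => e.2 = v) := by rw [hs]; simp
  have hf : f ∈ N.arcs.filter (fun e => e.2 = v) := by rw [hs]; simp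
  rw [Finset.mem_filter] at he hf
  refine ⟨e.1, f.1, ?_, ?_, ?_, ?_⟩
  · intro hq
    exact hef (Prod.ext hq (he.2.trans hf.2.symm))
  · rw [Arc, ← he.2]; exact he.1
  · rw [Arc, ← hf.2]; exact hf.1
  · intro x hx
    have : (x, v) ∈ N.arcs.filter (fun e => e.2 = v) := by
      rw [Finset.mem_filter]; exact ⟨hx, rfl⟩
    rw [hs, Finset.mem_insert, Finset.mem_singleton] at this
    rcases this with rfl | rfl
    · exact Or.inl rfl
    · exact Or.inr rfl


/-! ### Phylogenetic-network structure facts -/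

section Phylo

variable (hphy : N.IsPhylo) (hm : 2 ≤ N.leaves.card)
include hphy hm
set_option linter.unusedSectionVars false

lemma card_ne_one : N.verts.card ≠ 1 := by
  have h1 : N.leaves ⊆ N.verts := Finset.filter_subset _ _
  have := Finset.card_le_card h1
  omega

lemma arc_mem_left {u v : V} (h : N.Arc u v) : u ∈ N.verts := (hphy.2.1 (u,v) h).1

lemma arc_mem_right {u v : V} (h : N.Arc u v) : v ∈ N.verts := (hphy.2.1 (u,v) h).2

lemma acyc : ∀ v : V, ¬ Relation.TransGen N.Arc v v := hphy.2.2.1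

lemma reach {v : V} (hv : v ∈ N.verts) : N.Ancestor N.root v := hphy.2.2.2.1 v hv

lemma phylo_main :
    N.indeg N.root = 0 ∧ N.outdeg N.root = 2 ∧
    ∀ v ∈ N.verts, v ≠ N.root →
      (N.indeg v = 1 ∧ N.outdeg v = 0) ∨
      (N.indeg v = 1 ∧ N.outdeg v = 2) ∨
      (N.indeg v = 2 ∧ N.outdeg v = 1) := by
  have h := hphy.2.2.2.2
  rwa [if_neg (card_ne_one hphy hm)] at h

lemma root_indeg : N.indeg N.root = 0 := (phylo_main hphy hm).1

lemma root_outdeg : N.outdeg N.root = 2 := (phylo_main hphy hm).2.1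

lemma classify {v : V} (hv : v ∈ N.verts) (hne : v ≠ N.root) :
    (N.indeg v = 1 ∧ N.outdeg v = 0) ∨
    (N.indeg v = 1 ∧ N.outdeg v = 2) ∨
    (N.indeg v = 2 ∧ N.outdeg v = 1) := (phylo_main hphy hm).2.2 v hv hne

/-- strict-ancestor count, a measure decreasing upwards. -/
noncomputable def sancCard (N : Net V) (v : V) : ℕ :=
  (N.verts.filter (fun u => Relation.TransGen N.Arc u v)).card

lemma sanc_lt {p v : V} (hp : p ∈ N.verts) (h : Relation.TransGen N.Arc p v) :
    N.sancCard p < N.sancCard v := by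
  apply Finset.card_lt_card
  constructor
  · intro u hu
    rw [Finset.mem_filter] at hu ⊢
    exact ⟨hu.1, hu.2.trans h⟩
  · intro hsub
    have hpv : p ∈ N.verts.filter (fun u => Relation.TransGen N.Arc u v) := by
      rw [Finset.mem_filter]; exact ⟨hp, h⟩
    have := hsub hpv
    rw [Finset.mem_filter] at this
    exact acyc hphy hm p this.2

/-! ### Reticulations, tree arcs, component roots -/

/-- Degree-wise reticulation predicate. -/
def RetD (N : Net V) (v : V) : Prop := N.indeg v = 2 ∧ N.outdeg v = 1

/-- Arc whose target is not a reticulation. -/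
def TArc (N : Net V) (u w : V) : Prop := N.Arc u w ∧ ¬ N.RetD w

/-- Reachability along tree arcs. -/
def TReach (N : Net V) : V → V → Prop := Relation.ReflTransGen N.TArc

/-- Component roots: the network root together with children of reticulations. -/
noncomputable def CRs (N : Net V) : Finset V :=
  N.verts.filter (fun c => ¬ N.RetD c ∧ (c = N.root ∨ ∃ ρ, N.RetD ρ ∧ N.Arc ρ c))

lemma root_not_retd : ¬ N.RetD N.root := by
  intro h
  have := root_indeg hphy hm
  rw [RetD] at h
  omega

lemma treach_arc {u v : V} (h : N.TReach u v) : N.Ancestor u v :=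
  Relation.ReflTransGen.mono (fun _ _ hh => hh.1 : ∀ a b, N.TArc a b → N.Arc a b) u v h

lemma treach_nonret {c p : V} (h : N.TReach c p) (hc : ¬ N.RetD c) : ¬ N.RetD p := by
  induction h with
  | refl => exact hc
  | tail _ h2 _ => exact h2.2

lemma treach_mem {c p : V} (h : N.TReach c p) (hc : c ∈ N.verts) : p ∈ N.verts := by
  induction h with
  | refl => exact hc
  | tail _ h2 _ => exact arc_mem_right hphy hm h2.1

/-- the verifying-leaf domination predicate. -/
def Dom (N : Net V) (ρ v : V) : Prop := ∀ l, N.IsPathList N.root v l → ρ ∈ l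

lemma dom_parent {ρ v p : V} (hdom : N.Dom ρ v) (hne : v ≠ ρ) (hp : N.Arc p v) :
    N.Dom ρ p := by
  intro l hl
  by_contra hρ
  have h2 := hdom (l ++ [v]) (hl.append_arc hp)
  rcases List.mem_append.1 h2 with h | h
  · exact hρ h
  · exact hne (List.mem_singleton.1 h).symm

lemma dom_ne_root {ρ v : V} (hdom : N.Dom ρ v) (hρ : ρ ≠ N.root) : v ≠ N.root := by
  rintro rfl
  have := hdom [N.root] (.nil _)
  exact hρ (List.mem_singleton.1 this)

lemma retd_ne_root (hv : N.RetD v) : v ≠ N.root := by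
  rintro rfl
  have := root_indeg hphy hm
  rw [RetD] at hv
  omega

/-- No stacked reticulations: the child of a reticulation is not a reticulation. -/
lemma no_stack (hrv : N.ReticVisible) {ρ c : V}
    (hρ : N.RetD ρ) (hρv : ρ ∈ N.verts) (harc : N.Arc ρ c) : ¬ N.RetD c := by
  intro hc
  obtain ⟨ℓ, hleaf, hver⟩ := hrv ρ ⟨hρv, hρ⟩
  have hcρ : c ≠ ρ := by
    rintro rfl
    exact acyc hphy hm c (Relation.TransGen.single harc)
  -- second parent q of c
  obtain ⟨a, b, hab, ha, hb, hall⟩ := two_parents hc.1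
  have hq : ∃ q, q ≠ ρ ∧ N.Arc q c := by
    rcases hall ρ harc with rfl | rfl
    · exact ⟨b, fun h => hab h.symm, hb⟩
    · exact ⟨a, fun h => hab h, ha⟩
  obtain ⟨q, hqρ, hqc⟩ := hq
  -- q is not dominated by ρ
  have hqdom : ¬ N.Dom ρ q := by
    intro hdom
    obtain ⟨l, hl⟩ := exists_pathList (reach hphy hm (arc_mem_left hphy hm hqc))
    obtain ⟨l', hl'⟩ := hl.suffix_from (hdom l hl)
    cases hl' with
    | nil => exact hqρ rfl
    | cons h1 hp =>
      rename_i w t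
      have hwc : c = w := (arc_out_unique hρ.2 h1 harc).symm
      subst hwc
      exact acyc hphy hm c (Relation.TransGen.tail' (hp.toAncestor) hqc)
  rw [Dom] at hqdom; push_neg at hqdom
  obtain ⟨l0, hl0, hρl0⟩ := hqdom
  -- path from root to c avoiding ρ
  have hlc : N.IsPathList N.root c (l0 ++ [c]) := hl0.append_arc hqc
  have hρlc : ρ ∉ l0 ++ [c] := by
    intro h
    rcases List.mem_append.1 h with h | h
    · exact hρl0 h
    · exact hcρ (List.mem_singleton.1 h).symm
  -- path from c to ℓ avoiding ρ
  obtain ⟨lℓ, hlℓ⟩ := exists_pathList (reach hphy hm hleaf.1)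
  obtain ⟨l', hl'⟩ := hlℓ.suffix_from (hver lℓ hlℓ)
  cases hl' with
  | nil =>
    have := hleaf.2
    rw [hρ.2] at this
    omega
  | cons h1 hp =>
    rename_i w t
    have hwc : c = w := (arc_out_unique hρ.2 h1 harc).symm
    subst hwc
    have hρt : ρ ∉ t := by
      intro hmem
      exact acyc hphy hm c (Relation.TransGen.tail' (hp.ancestor_of_mem hmem) harc)
    have hglue := hlc.glue hp
    have := hver _ hglue
    rcases List.mem_append.1 this with h | h
    · exact hρlc h
    · obtain ⟨t', rfl⟩ := hp.head_eq
      exact hρt (List.mem_of_mem_tail h)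


lemma cr_no_tree_parent {p q : V} (hp : p ∈ N.CRs) (hq : N.Arc q p) (hqr : ¬ N.RetD q) :
    False := by
  rcases (Finset.mem_filter.1 hp).2.2 with hroot | ⟨ρ, hρ, hρarc⟩
  · subst hroot
    exact no_arc_of_indeg_zero (root_indeg hphy hm) hq
  · have hproot : p ≠ N.root := by
      rintro rfl
      exact no_arc_of_indeg_zero (root_indeg hphy hm) hρarc
    have hpnr : ¬ N.RetD p := (Finset.mem_filter.1 hp).2.1
    have hdeg : N.indeg p = 1 := by
      rcases classify hphy hm (Finset.mem_filter.1 hp).1 hproot with h | h | h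
      · exact h.1
      · exact h.1
      · exact absurd h hpnr
    have := parent_unique hdeg hq hρarc
    subst this
    exact hqr hρ

lemma croot_unique :
    ∀ p ∈ N.verts, ¬ N.RetD p → ∀ c1 ∈ N.CRs, ∀ c2 ∈ N.CRs,
      N.TReach c1 p → N.TReach c2 p → c1 = c2 := by
  suffices H : ∀ n, ∀ p ∈ N.verts, N.sancCard p < n → ¬ N.RetD p →
      ∀ c1 ∈ N.CRs, ∀ c2 ∈ N.CRs, N.TReach c1 p → N.TReach c2 p → c1 = c2 by
    intro p hp
    exact H (N.sancCard p + 1) p hp (Nat.lt_succ_self _)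
  intro n
  induction n with
  | zero => intro p _ h; omega
  | succ n ih =>
    intro p hp hlt hnr c1 hc1 c2 hc2 h1 h2
    rcases Relation.ReflTransGen.cases_tail h1 with rfl | ⟨q1, hq1, ht1⟩
    · rcases Relation.ReflTransGen.cases_tail h2 with rfl | ⟨q2, hq2, ht2⟩
      · rfl
      · exact absurd (cr_no_tree_parent hphy hm hc1 ht2.1
          (treach_nonret hphy hm hq2 (Finset.mem_filter.1 hc2).2.1)) id
    · rcases Relation.ReflTransGen.cases_tail h2 with rfl | ⟨q2, hq2, ht2⟩
      · exact absurd (cr_no_tree_parent hphy hm hc2 ht1.1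
          (treach_nonret hphy hm hq1 (Finset.mem_filter.1 hc1).2.1)) id
      · have hproot : p ≠ N.root := by
          rintro rfl
          exact no_arc_of_indeg_zero (root_indeg hphy hm) ht1.1
        have hdeg : N.indeg p = 1 := by
          rcases classify hphy hm hp hproot with h | h | h
          · exact h.1
          · exact h.1
          · exact absurd h hnr
        have hq12 : q1 = q2 := parent_unique hdeg ht1.1 ht2.1
        subst hq12
        have hq1nr : ¬ N.RetD q1 := treach_nonret hphy hm hq1 (Finset.mem_filter.1 hc1).2.1
        have hq1v : q1 ∈ N.verts := arc_mem_left hphy hm ht1.1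
        have hmeas : N.sancCard q1 < N.sancCard p :=
          sanc_lt hphy hm hq1v (Relation.TransGen.single ht1.1)
        exact ih q1 hq1v (by omega) hq1nr c1 hc1 c2 hc2 hq1 hq2

lemma root_mem_CRs : N.root ∈ N.CRs := by
  rw [CRs, Finset.mem_filter]
  exact ⟨hphy.1, root_not_retd hphy hm, Or.inl rfl⟩

lemma croot_exists :
    ∀ p ∈ N.verts, ¬ N.RetD p → ∃ c ∈ N.CRs, N.TReach c p := by
  suffices H : ∀ n, ∀ p ∈ N.verts, N.sancCard p < n → ¬ N.RetD p →
      ∃ c ∈ N.CRs, N.TReach c p by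
    intro p hp
    exact H (N.sancCard p + 1) p hp (Nat.lt_succ_self _)
  intro n
  induction n with
  | zero => intro p _ h; omega
  | succ n ih =>
    intro p hp hlt hnr
    by_cases hproot : p = N.root
    · subst hproot
      exact ⟨N.root, root_mem_CRs hphy hm, Relation.ReflTransGen.refl⟩
    · have hdeg : N.indeg p = 1 := by
        rcases classify hphy hm hp hproot with h | h | h
        · exact h.1
        · exact h.1
        · exact absurd h hnr
      obtain ⟨p0, hp0⟩ := parent_exists (by omega : N.indeg p ≠ 0)
      by_cases hp0r : N.RetD p0
      · refine ⟨p, ?_, Relation.ReflTransGen.refl⟩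
        rw [CRs, Finset.mem_filter]
        exact ⟨hp, hnr, Or.inr ⟨p0, hp0r, hp0⟩⟩
      · have hp0v : p0 ∈ N.verts := arc_mem_left hphy hm hp0
        have hmeas : N.sancCard p0 < N.sancCard p :=
          sanc_lt hphy hm hp0v (Relation.TransGen.single hp0)
        obtain ⟨c, hc, htr⟩ := ih p0 hp0v (by omega) hp0r
        exact ⟨c, hc, htr.tail ⟨hp0, hnr⟩⟩

/-- Key lemma: if the tree component below reticulation `ρ` (rooted at its
child `c`) has no inner reticulation, then every vertex dominated by `ρ`
lies in the component (or is `ρ` itself). -/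
lemma dom_in_comp (hrv : N.ReticVisible) {ρ c : V} (hρ : N.RetD ρ) (hρv : ρ ∈ N.verts)
    (harc : N.Arc ρ c)
    (hni : ¬ ∃ v ∈ N.verts, N.RetD v ∧ ∀ p, N.Arc p v → N.TReach c p) :
    ∀ v ∈ N.verts, N.Dom ρ v → v = ρ ∨ (¬ N.RetD v ∧ N.TReach c v) := by
  suffices H : ∀ n, ∀ v ∈ N.verts, N.sancCard v < n → N.Dom ρ v →
      v = ρ ∨ (¬ N.RetD v ∧ N.TReach c v) by
    intro v hv
    exact H (N.sancCard v + 1) v hv (Nat.lt_succ_self _)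
  intro n
  induction n with
  | zero => intro v _ h; omega
  | succ n ih =>
    intro v hv hlt hdom
    by_cases hvρ : v = ρ
    · exact Or.inl hvρ
    have hvroot : v ≠ N.root := dom_ne_root hphy hm hdom (retd_ne_root hphy hm hρ)
    have hcnr : ¬ N.RetD c := no_stack hphy hm hrv hρ hρv harc
    rcases classify hphy hm hv hvroot with hd | hd | hd
    -- leaf or tree vertex: unique parent
    · obtain ⟨p0, hp0⟩ := parent_exists (by omega : N.indeg v ≠ 0)
      have hnr : ¬ N.RetD v := by rw [RetD]; omega
      have hp0v : p0 ∈ N.verts := arc_mem_left hphy hm hp0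
      have hp0dom : N.Dom ρ p0 := dom_parent hphy hm hdom hvρ hp0
      have hmeas : N.sancCard p0 < N.sancCard v :=
        sanc_lt hphy hm hp0v (Relation.TransGen.single hp0)
      rcases ih p0 hp0v (by omega) hp0dom with rfl | ⟨hp0nr, htr⟩
      · have : v = c := arc_out_unique hρ.2 hp0 harc
        subst this
        exact Or.inr ⟨hnr, Relation.ReflTransGen.refl⟩
      · exact Or.inr ⟨hnr, htr.tail ⟨hp0, hnr⟩⟩
    · obtain ⟨p0, hp0⟩ := parent_exists (by omega : N.indeg v ≠ 0)
      have hnr : ¬ N.RetD v := by rw [RetD]; omega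
      have hp0v : p0 ∈ N.verts := arc_mem_left hphy hm hp0
      have hp0dom : N.Dom ρ p0 := dom_parent hphy hm hdom hvρ hp0
      have hmeas : N.sancCard p0 < N.sancCard v :=
        sanc_lt hphy hm hp0v (Relation.TransGen.single hp0)
      rcases ih p0 hp0v (by omega) hp0dom with rfl | ⟨hp0nr, htr⟩
      · have : v = c := arc_out_unique hρ.2 hp0 harc
        subst this
        exact Or.inr ⟨hnr, Relation.ReflTransGen.refl⟩
      · exact Or.inr ⟨hnr, htr.tail ⟨hp0, hnr⟩⟩
    -- reticulation: both parents in the component, contradiction with hni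
    · exfalso
      obtain ⟨a, b, hab, ha, hb, hall⟩ := two_parents hd.1
      have key : ∀ p, N.Arc p v → N.TReach c p := by
        intro p hparc
        have hpv : p ∈ N.verts := arc_mem_left hphy hm hparc
        have hpdom : N.Dom ρ p := dom_parent hphy hm hdom hvρ hparc
        have hmeas : N.sancCard p < N.sancCard v :=
          sanc_lt hphy hm hpv (Relation.TransGen.single hparc)
        rcases ih p hpv (by omega) hpdom with rfl | ⟨_, htr⟩
        · have : v = c := arc_out_unique hρ.2 hparc harc
          subst this
          exact absurd hd hcnr
        · exact htr
      exact hni ⟨v, hv, hd, key⟩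

/-- Every non-exposed tree component has an inner reticulation. -/
lemma inner_exists (hrv : N.ReticVisible) {c : V} (hc : c ∈ N.CRs)
    (hnx : ¬ ∃ ℓ, N.IsLeaf ℓ ∧ N.TReach c ℓ) :
    ∃ v ∈ N.verts, N.RetD v ∧ ∀ p, N.Arc p v → N.TReach c p := by
  by_contra hni
  rcases (Finset.mem_filter.1 hc).2.2 with hroot | ⟨ρ, hρ, harc⟩
  · subst hroot
    by_cases hr : N.retics.Nonempty
    · obtain ⟨v₀, hv₀, hmin⟩ := Finset.exists_min_image N.retics N.sancCard hr
      rw [retics, Finset.mem_filter] at hv₀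
      apply hni
      refine ⟨v₀, hv₀.1, hv₀.2, ?_⟩
      intro p hp
      have hpv : p ∈ N.verts := arc_mem_left hphy hm hp
      have hpnr : ¬ N.RetD p := by
        intro hpr
        exact (no_stack hphy hm hrv hpr hpv hp) hv₀.2
      obtain ⟨c', hc', htr⟩ := croot_exists hphy hm p hpv hpnr
      rcases (Finset.mem_filter.1 hc').2.2 with rfl | ⟨ρ', hρ', harc'⟩
      · exact htr
      · exfalso
        have hρ'v : ρ' ∈ N.verts := arc_mem_left hphy hm harc'
        have htg : Relation.TransGen N.Arc ρ' v₀ :=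
          Relation.TransGen.tail' (Relation.ReflTransGen.head harc' (treach_arc hphy hm htr)) hp
        have h1 : N.sancCard ρ' < N.sancCard v₀ := sanc_lt hphy hm hρ'v htg
        have h2 : N.sancCard v₀ ≤ N.sancCard ρ' := by
          apply hmin
          rw [retics, Finset.mem_filter]
          exact ⟨hρ'v, hρ'⟩
        omega
    · exfalso
      have hlv : N.leaves.Nonempty := by
        rw [← Finset.card_pos]; omega
      obtain ⟨ℓ, hℓ⟩ := hlv
      rw [leaves, Finset.mem_filter] at hℓ
      have hℓnr : ¬ N.RetD ℓ := by rw [RetD]; omega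
      obtain ⟨c', hc', htr⟩ := croot_exists hphy hm ℓ hℓ.1 hℓnr
      rcases (Finset.mem_filter.1 hc').2.2 with rfl | ⟨ρ', hρ', harc'⟩
      · exact hnx ⟨ℓ, ⟨hℓ.1, hℓ.2⟩, htr⟩
      · refine hr ⟨ρ', ?_⟩
        rw [retics, Finset.mem_filter]
        exact ⟨arc_mem_left hphy hm harc', hρ'⟩
  · have hρv : ρ ∈ N.verts := arc_mem_left hphy hm harc
    obtain ⟨ℓ, hleaf, hver⟩ := hrv ρ ⟨hρv, hρ⟩
    rcases dom_in_comp hphy hm hrv hρ hρv harc hni ℓ hleaf.1 hver with rfl | ⟨_, htr⟩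
    · have := hleaf.2
      rw [hρ.2] at this
      omega
    · exact hnx ⟨ℓ, hleaf, htr⟩



/-! ### Counting -/

/-- The child of a vertex (junk value if none). -/
noncomputable def chd (N : Net V) (ρ : V) : V :=
  if h : ∃ w, N.Arc ρ w then Classical.choose h else ρ

omit hphy hm in
lemma chd_arc {ρ : V} (h : N.outdeg ρ ≠ 0) : N.Arc ρ (N.chd ρ) := by
  obtain ⟨w, hw⟩ := arc_of_outdeg_pos h
  rw [chd, dif_pos ⟨w, hw⟩]
  exact Classical.choose_spec (⟨w, hw⟩ : ∃ w, N.Arc ρ w)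

omit hphy hm in
lemma chd_eq {ρ w : V} (h : N.outdeg ρ = 1) (hw : N.Arc ρ w) : w = N.chd ρ :=
  arc_out_unique h hw (chd_arc (by omega))

lemma CRs_card (hrv : N.ReticVisible) : N.CRs.card = N.retics.card + 1 := by
  classical
  have hroot := root_mem_CRs hphy hm
  rw [← Finset.card_erase_add_one hroot]
  congr 1
  have himage : N.CRs.erase N.root = N.retics.image N.chd := by
    ext c
    constructor
    · intro hc
      rw [Finset.mem_erase] at hc
      rcases (Finset.mem_filter.1 hc.2).2.2 with h | ⟨ρ, hρ, harc⟩
      · exact absurd h hc.1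
      · rw [Finset.mem_image]
        refine ⟨ρ, ?_, (chd_eq hρ.2 harc).symm⟩
        rw [retics, Finset.mem_filter]
        exact ⟨arc_mem_left hphy hm harc, hρ⟩
    · intro hc
      rw [Finset.mem_image] at hc
      obtain ⟨ρ, hρ, rfl⟩ := hc
      rw [retics, Finset.mem_filter] at hρ
      have harc : N.Arc ρ (N.chd ρ) := chd_arc (by have := hρ.2.2; omega)
      have hnr : ¬ N.RetD (N.chd ρ) := no_stack hphy hm hrv hρ.2 hρ.1 harc
      rw [Finset.mem_erase]
      constructor
      · intro h
        rw [h] at harc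
        exact no_arc_of_indeg_zero (root_indeg hphy hm) harc
      · rw [CRs, Finset.mem_filter]
        exact ⟨arc_mem_right hphy hm harc, hnr, Or.inr ⟨ρ, hρ.2, harc⟩⟩
  rw [himage]
  apply Finset.card_image_of_injOn
  intro ρ1 h1 ρ2 h2 heq
  rw [Finset.mem_coe, retics, Finset.mem_filter] at h1 h2
  have ha1 : N.Arc ρ1 (N.chd ρ1) := chd_arc (by have := h1.2.2; omega)
  have ha2 : N.Arc ρ2 (N.chd ρ2) := chd_arc (by have := h2.2.2; omega)
  rw [← heq] at ha2
  have hnr : ¬ N.RetD (N.chd ρ1) := no_stack hphy hm hrv h1.2 h1.1 ha1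
  have hcroot : N.chd ρ1 ≠ N.root := by
    intro h
    rw [h] at ha1
    exact no_arc_of_indeg_zero (root_indeg hphy hm) ha1
  have hdeg : N.indeg (N.chd ρ1) = 1 := by
    rcases classify hphy hm (arc_mem_right hphy hm ha1) hcroot with h | h | h
    · exact h.1
    · exact h.1
    · exact absurd h hnr
  exact parent_unique hdeg ha1 ha2

lemma Xc_card_le :
    (N.CRs.filter (fun c => ∃ ℓ, N.IsLeaf ℓ ∧ N.TReach c ℓ)).card ≤ N.leaves.card := by
  classical
  apply Finset.card_le_card_of_injOn
    (fun c => if h : ∃ ℓ, N.IsLeaf ℓ ∧ N.TReach c ℓ then h.choose else c)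
  · intro c hc
    rw [Finset.mem_coe, Finset.mem_filter] at hc
    dsimp only; rw [Finset.mem_coe]
    rw [dif_pos hc.2]
    have hspec := hc.2.choose_spec
    rw [leaves, Finset.mem_filter]
    exact ⟨hspec.1.1, hspec.1.2⟩
  · intro c1 hc1 c2 hc2 heq
    rw [Finset.coe_filter, Set.mem_setOf_eq] at hc1 hc2
    dsimp only at heq
    rw [dif_pos hc1.2, dif_pos hc2.2] at heq
    have h1 := hc1.2.choose_spec
    have h2 := hc2.2.choose_spec
    rw [heq] at h1
    set ℓ := hc2.2.choose with hℓ
    have hnr : ¬ N.RetD ℓ := by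
      intro hr
      have := h2.1.2
      rw [hr.2] at this
      omega
    exact croot_unique hphy hm ℓ h2.1.1 hnr c1 hc1.1 c2 hc2.1 h1.2 h2.2

lemma NonX_card_le (hrv : N.ReticVisible) :
    (N.CRs.filter (fun c => ¬ ∃ ℓ, N.IsLeaf ℓ ∧ N.TReach c ℓ)).card
      ≤ (N.retics.filter (fun v => ∃ c ∈ N.CRs, ∀ p, N.Arc p v → N.TReach c p)).card := by
  classical
  apply Finset.card_le_card_of_injOn
    (fun c => if h : ∃ v ∈ N.verts, N.RetD v ∧ ∀ p, N.Arc p v → N.TReach c p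
      then h.choose else c)
  · intro c hc
    rw [Finset.mem_coe, Finset.mem_filter] at hc
    have hin := inner_exists hphy hm hrv hc.1 hc.2
    dsimp only; rw [Finset.mem_coe]
    rw [dif_pos hin]
    have hspec := hin.choose_spec
    rw [Finset.mem_filter, retics, Finset.mem_filter]
    exact ⟨⟨hspec.1, hspec.2.1⟩, c, hc.1, hspec.2.2⟩
  · intro c1 hc1 c2 hc2 heq
    rw [Finset.coe_filter, Set.mem_setOf_eq] at hc1 hc2
    have hin1 := inner_exists hphy hm hrv hc1.1 hc1.2
    have hin2 := inner_exists hphy hm hrv hc2.1 hc2.2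
    dsimp only at heq
    rw [dif_pos hin1, dif_pos hin2] at heq
    have h1 := hin1.choose_spec
    have h2 := hin2.choose_spec
    rw [heq] at h1
    set v := hin2.choose with hv
    have hretd := h2.2.1
    rw [RetD] at hretd
    obtain ⟨p, hp⟩ := parent_exists (v := v) (by rw [hretd.1]; decide)
    have hpv : p ∈ N.verts := arc_mem_left hphy hm hp
    have hpnr : ¬ N.RetD p := by
      intro hr
      exact (no_stack hphy hm hrv hr hpv hp) h2.2.1
    exact croot_unique hphy hm p hpv hpnr c1 hc1.1 c2 hc2.1
      (h1.2.2 p hp) (h2.2.2 p hp)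

lemma dout_ge_two (hrv : N.ReticVisible) {c : V} (hc : c ∈ N.CRs)
    (hnx : ¬ ∃ ℓ, N.IsLeaf ℓ ∧ N.TReach c ℓ) :
    2 ≤ (N.retics.filter (fun v => ∃ p, N.Arc p v ∧ N.TReach c p)).card := by
  classical
  have hcm := Finset.mem_filter.1 hc
  have hcS : c ∈ N.verts.filter (fun v => ¬ N.RetD v ∧ N.TReach c v) := by
    rw [Finset.mem_filter]
    exact ⟨hcm.1, hcm.2.1, Relation.ReflTransGen.refl⟩
  obtain ⟨v, hvS, hmax⟩ := Finset.exists_max_image _ N.sancCard ⟨c, hcS⟩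
  rw [Finset.mem_filter] at hvS
  obtain ⟨hvv, hvnr, hvtr⟩ := hvS
  have hvout : N.outdeg v = 2 := by
    by_cases hvroot : v = N.root
    · rw [hvroot]; exact root_outdeg hphy hm
    · rcases classify hphy hm hvv hvroot with h | h | h
      · exact absurd (⟨v, ⟨hvv, h.2⟩, hvtr⟩ : ∃ ℓ, N.IsLeaf ℓ ∧ N.TReach c ℓ) hnx
      · exact h.2
      · exact absurd h hvnr
  obtain ⟨a, b, hab, ha, hb, _⟩ := two_children hvout
  have hkey : ∀ x, N.Arc v x → N.RetD x := by
    intro x hx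
    by_contra hnrx
    have hxS : x ∈ N.verts.filter (fun v => ¬ N.RetD v ∧ N.TReach c v) := by
      rw [Finset.mem_filter]
      exact ⟨arc_mem_right hphy hm hx, hnrx, hvtr.tail ⟨hx, hnrx⟩⟩
    have h1 := hmax x hxS
    have h2 := sanc_lt hphy hm hvv (Relation.TransGen.single hx)
    omega
  have hsub : ({a, b} : Finset V) ⊆
      N.retics.filter (fun v => ∃ p, N.Arc p v ∧ N.TReach c p) := by
    intro x hx
    rw [Finset.mem_insert, Finset.mem_singleton] at hx
    have harcx : N.Arc v x := by rcases hx with rfl | rfl; exacts [ha, hb]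
    rw [Finset.mem_filter, retics, Finset.mem_filter]
    exact ⟨⟨arc_mem_right hphy hm harcx, hkey x harcx⟩, v, harcx, hvtr⟩
  calc 2 = ({a, b} : Finset V).card := (Finset.card_pair hab).symm
    _ ≤ _ := Finset.card_le_card hsub

lemma pc_le_two (hrv : N.ReticVisible) {v : V} (hv : v ∈ N.retics) :
    (N.CRs.filter (fun c => ∃ p, N.Arc p v ∧ N.TReach c p)).card ≤ 2 := by
  rw [retics, Finset.mem_filter] at hv
  obtain ⟨a, b, hab, ha, hb, hall⟩ := two_parents hv.2.1
  have hanr : ¬ N.RetD a := fun hr => (no_stack hphy hm hrv hr (arc_mem_left hphy hm ha) ha) hv.2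
  have hbnr : ¬ N.RetD b := fun hr => (no_stack hphy hm hrv hr (arc_mem_left hphy hm hb) hb) hv.2
  obtain ⟨ca, hca, htra⟩ := croot_exists hphy hm a (arc_mem_left hphy hm ha) hanr
  obtain ⟨cb, hcb, htrb⟩ := croot_exists hphy hm b (arc_mem_left hphy hm hb) hbnr
  have hsub : N.CRs.filter (fun c => ∃ p, N.Arc p v ∧ N.TReach c p) ⊆ {ca, cb} := by
    intro c hcmem
    rw [Finset.mem_filter] at hcmem
    obtain ⟨hcCR, p, hp, htr⟩ := hcmem
    rw [Finset.mem_insert, Finset.mem_singleton]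
    rcases hall p hp with rfl | rfl
    · exact Or.inl (croot_unique hphy hm p (arc_mem_left hphy hm ha) hanr c hcCR ca hca htr htra)
    · exact Or.inr (croot_unique hphy hm p (arc_mem_left hphy hm hb) hbnr c hcCR cb hcb htr htrb)
  calc _ ≤ ({ca, cb} : Finset V).card := Finset.card_le_card hsub
    _ ≤ 2 := Finset.card_insert_le _ _ |>.trans (by simp)

lemma pc_le_one_of_inner (hrv : N.ReticVisible) {v : V} (hv : v ∈ N.retics)
    (hinn : ∃ c ∈ N.CRs, ∀ p, N.Arc p v → N.TReach c p) :
    (N.CRs.filter (fun c => ∃ p, N.Arc p v ∧ N.TReach c p)).card ≤ 1 := by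
  obtain ⟨c₀, hc₀, hall⟩ := hinn
  rw [retics, Finset.mem_filter] at hv
  have hsub : N.CRs.filter (fun c => ∃ p, N.Arc p v ∧ N.TReach c p) ⊆ {c₀} := by
    intro c hcmem
    rw [Finset.mem_filter] at hcmem
    obtain ⟨hcCR, p, hp, htr⟩ := hcmem
    rw [Finset.mem_singleton]
    have hpv : p ∈ N.verts := arc_mem_left hphy hm hp
    have hpnr : ¬ N.RetD p := fun hr => (no_stack hphy hm hrv hr hpv hp) hv.2
    exact croot_unique hphy hm p hpv hpnr c hcCR c₀ hc₀ htr (hall p hp)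
  calc _ ≤ ({c₀} : Finset V).card := Finset.card_le_card hsub
    _ = 1 := Finset.card_singleton _



/-! ### Degree sums -/

lemma arcs_card_out : N.arcs.card = ∑ v ∈ N.verts, N.outdeg v :=
  Finset.card_eq_sum_card_fiberwise (fun e he => (hphy.2.1 e he).1)

lemma arcs_card_in : N.arcs.card = ∑ v ∈ N.verts, N.indeg v :=
  Finset.card_eq_sum_card_fiberwise (fun e he => (hphy.2.1 e he).2)

omit hphy hm in
lemma sum_verts_split (f : V → ℕ) :
    ∑ v ∈ N.verts, f v = ∑ v ∈ N.leaves, f v + (∑ v ∈ N.retics, f v +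
      ∑ v ∈ N.verts.filter (fun v =>
        N.outdeg v ≠ 0 ∧ ¬ (N.indeg v = 2 ∧ N.outdeg v = 1)), f v) := by
  classical
  have h1 := Finset.sum_filter_add_sum_filter_not N.verts (fun v => N.outdeg v = 0) f
  have h2 := Finset.sum_filter_add_sum_filter_not
    (N.verts.filter (fun v => ¬ N.outdeg v = 0)) (fun v => N.indeg v = 2 ∧ N.outdeg v = 1) f
  have e1 : (N.verts.filter (fun v => ¬ N.outdeg v = 0)).filter
      (fun v => N.indeg v = 2 ∧ N.outdeg v = 1) = N.retics := by
    rw [Finset.filter_filter, retics]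
    apply Finset.filter_congr
    intro v _
    constructor
    · rintro ⟨_, h⟩; exact h
    · intro h; exact ⟨by omega, h⟩
  have e2 : (N.verts.filter (fun v => ¬ N.outdeg v = 0)).filter
      (fun v => ¬ (N.indeg v = 2 ∧ N.outdeg v = 1)) =
      N.verts.filter (fun v => N.outdeg v ≠ 0 ∧ ¬ (N.indeg v = 2 ∧ N.outdeg v = 1)) := by
    rw [Finset.filter_filter]
  have e3 : N.verts.filter (fun v => N.outdeg v = 0) = N.leaves := rfl
  rw [e1, e2] at h2
  rw [e3] at h1
  omega

lemma sum_leaves_out : ∑ v ∈ N.leaves, N.outdeg v = 0 := by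
  apply Finset.sum_eq_zero
  intro v hv
  rw [leaves, Finset.mem_filter] at hv
  exact hv.2

lemma sum_retics_out : ∑ v ∈ N.retics, N.outdeg v = N.retics.card := by
  have h : ∀ v ∈ N.retics, N.outdeg v = 1 := by
    intro v hv
    rw [retics, Finset.mem_filter] at hv
    exact hv.2.2
  rw [Finset.sum_eq_card_nsmul h, smul_eq_mul, mul_one]

lemma TT_mem_deg {v : V} (hv : v ∈ N.verts.filter (fun v =>
    N.outdeg v ≠ 0 ∧ ¬ (N.indeg v = 2 ∧ N.outdeg v = 1))) :
    (v = N.root ∧ N.indeg v = 0 ∧ N.outdeg v = 2) ∨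
    (v ≠ N.root ∧ N.indeg v = 1 ∧ N.outdeg v = 2) := by
  rw [Finset.mem_filter] at hv
  by_cases hr : v = N.root
  · subst hr
    exact Or.inl ⟨rfl, root_indeg hphy hm, root_outdeg hphy hm⟩
  · rcases classify hphy hm hv.1 hr with h | h | h
    · exact absurd h.2 hv.2.1
    · exact Or.inr ⟨hr, h⟩
    · exact absurd h hv.2.2

lemma sum_TT_out : ∑ v ∈ N.verts.filter (fun v =>
    N.outdeg v ≠ 0 ∧ ¬ (N.indeg v = 2 ∧ N.outdeg v = 1)), N.outdeg v =
    2 * (N.verts.filter (fun v =>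
      N.outdeg v ≠ 0 ∧ ¬ (N.indeg v = 2 ∧ N.outdeg v = 1))).card := by
  have h : ∀ v ∈ N.verts.filter (fun v =>
      N.outdeg v ≠ 0 ∧ ¬ (N.indeg v = 2 ∧ N.outdeg v = 1)), N.outdeg v = 2 := by
    intro v hv
    rcases TT_mem_deg hphy hm hv with h | h
    · exact h.2.2
    · exact h.2.2
  rw [Finset.sum_eq_card_nsmul h, smul_eq_mul, mul_comm]

lemma sum_leaves_in : ∑ v ∈ N.leaves, N.indeg v = N.leaves.card := by
  have hh : ∀ v ∈ N.leaves, N.indeg v = 1 := by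
    intro v hv
    rw [leaves, Finset.mem_filter] at hv
    have hvroot : v ≠ N.root := by
      intro h
      rw [h] at hv
      have := root_outdeg hphy hm
      omega
    rcases classify hphy hm hv.1 hvroot with h | h | h
    · exact h.1
    · rw [hv.2] at h; omega
    · rw [hv.2] at h; omega
  rw [Finset.sum_eq_card_nsmul hh, smul_eq_mul, mul_one]

lemma sum_retics_in : ∑ v ∈ N.retics, N.indeg v = 2 * N.retics.card := by
  have h : ∀ v ∈ N.retics, N.indeg v = 2 := by
    intro v hv
    rw [retics, Finset.mem_filter] at hv
    exact hv.2.1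
  rw [Finset.sum_eq_card_nsmul h, smul_eq_mul, mul_comm]

lemma root_mem_TT : N.root ∈ N.verts.filter (fun v =>
    N.outdeg v ≠ 0 ∧ ¬ (N.indeg v = 2 ∧ N.outdeg v = 1)) := by
  rw [Finset.mem_filter]
  refine ⟨hphy.1, ?_, ?_⟩
  · rw [root_outdeg hphy hm]; omega
  · rw [root_indeg hphy hm]; omega

lemma sum_TT_in : (∑ v ∈ N.verts.filter (fun v =>
    N.outdeg v ≠ 0 ∧ ¬ (N.indeg v = 2 ∧ N.outdeg v = 1)), N.indeg v) + 1 =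
    (N.verts.filter (fun v =>
      N.outdeg v ≠ 0 ∧ ¬ (N.indeg v = 2 ∧ N.outdeg v = 1))).card := by
  have hroot := root_mem_TT hphy hm
  rw [← Finset.sum_erase_add _ _ hroot, root_indeg hphy hm, add_zero]
  rw [← Finset.card_erase_add_one hroot]
  congr 1
  have h : ∀ v ∈ (N.verts.filter (fun v =>
      N.outdeg v ≠ 0 ∧ ¬ (N.indeg v = 2 ∧ N.outdeg v = 1))).erase N.root, N.indeg v = 1 := by
    intro v hv
    rw [Finset.mem_erase] at hv
    rcases TT_mem_deg hphy hm hv.2 with h | h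
    · exact absurd h.1 hv.1
    · exact h.2.1
  rw [Finset.sum_eq_card_nsmul h, smul_eq_mul, mul_one]

/-- The central inequality: `r ≤ 3m - 3`. -/
lemma retics_le (hrv : N.ReticVisible) : N.retics.card + 3 ≤ 3 * N.leaves.card := by
  classical
  set Xc := N.CRs.filter (fun c => ∃ ℓ, N.IsLeaf ℓ ∧ N.TReach c ℓ) with hXc
  set NonX := N.CRs.filter (fun c => ¬ ∃ ℓ, N.IsLeaf ℓ ∧ N.TReach c ℓ) with hNonX
  set Inn := N.retics.filter (fun v => ∃ c ∈ N.CRs, ∀ p, N.Arc p v → N.TReach c p) with hInn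
  have h2 : N.CRs.card = N.retics.card + 1 := CRs_card hphy hm hrv
  have h3 : Xc.card + NonX.card = N.CRs.card :=
    Finset.card_filter_add_card_filter_not _
  have h4 : NonX.card ≤ Inn.card := NonX_card_le hphy hm hrv
  have h5 : Xc.card ≤ N.leaves.card := Xc_card_le hphy hm
  have h7 : 2 * NonX.card ≤
      ∑ c ∈ NonX, (N.retics.filter (fun v => ∃ p, N.Arc p v ∧ N.TReach c p)).card := by
    have := Finset.card_nsmul_le_sum NonX
      (fun c => (N.retics.filter (fun v => ∃ p, N.Arc p v ∧ N.TReach c p)).card) 2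
      (fun c hc => by
        rw [hNonX, Finset.mem_filter] at hc
        exact dout_ge_two hphy hm hrv hc.1 hc.2)
    rwa [smul_eq_mul, mul_comm] at this
  have h8 : (∑ c ∈ NonX, (N.retics.filter (fun v => ∃ p, N.Arc p v ∧ N.TReach c p)).card)
      ≤ ∑ c ∈ N.CRs, (N.retics.filter (fun v => ∃ p, N.Arc p v ∧ N.TReach c p)).card :=
    Finset.sum_le_sum_of_subset (Finset.filter_subset _ _)
  have h9 : (∑ c ∈ N.CRs, (N.retics.filter (fun v => ∃ p, N.Arc p v ∧ N.TReach c p)).card)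
      = ∑ v ∈ N.retics, (N.CRs.filter (fun c => ∃ p, N.Arc p v ∧ N.TReach c p)).card := by
    simp only [Finset.card_filter]
    exact Finset.sum_comm
  have h10 : (∑ v ∈ N.retics, (N.CRs.filter (fun c => ∃ p, N.Arc p v ∧ N.TReach c p)).card)
      ≤ Inn.card * 1 + (N.retics.filter (fun v =>
          ¬ ∃ c ∈ N.CRs, ∀ p, N.Arc p v → N.TReach c p)).card * 2 := by
    calc (∑ v ∈ N.retics, (N.CRs.filter (fun c => ∃ p, N.Arc p v ∧ N.TReach c p)).card)
        ≤ ∑ v ∈ N.retics, (if ∃ c ∈ N.CRs, ∀ p, N.Arc p v → N.TReach c p then 1 else 2) := by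
          apply Finset.sum_le_sum
          intro v hv
          by_cases hinn : ∃ c ∈ N.CRs, ∀ p, N.Arc p v → N.TReach c p
          · rw [if_pos hinn]; exact pc_le_one_of_inner hphy hm hrv hv hinn
          · rw [if_neg hinn]; exact pc_le_two hphy hm hrv hv
      _ = Inn.card * 1 + (N.retics.filter (fun v =>
            ¬ ∃ c ∈ N.CRs, ∀ p, N.Arc p v → N.TReach c p)).card * 2 := by
          rw [Finset.sum_ite, Finset.sum_const, Finset.sum_const, smul_eq_mul, smul_eq_mul,
            hInn]
  have h11 : Inn.card + (N.retics.filter (fun v =>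
      ¬ ∃ c ∈ N.CRs, ∀ p, N.Arc p v → N.TReach c p)).card = N.retics.card :=
    Finset.card_filter_add_card_filter_not _
  omega

end Phylo

end Net

/-- A reticulation-visible phylogenetic network with `m = |X| ≥ 2` leaves has
at most `4m - 4` non-leaf, non-reticulation vertices (the root together with
the tree vertices). -/
theorem stmt_17 {V : Type} [DecidableEq V] (N : Net V)
    (hphylo : N.IsPhylo) (hrv : N.ReticVisible)
    (hm : 2 ≤ N.leaves.card) :
    (N.verts.filter (fun v =>
        N.outdeg v ≠ 0 ∧ ¬ (N.indeg v = 2 ∧ N.outdeg v = 1))).card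
      ≤ 4 * N.leaves.card - 4 := by
  classical
  have e_out := Net.arcs_card_out hphylo hm
  have e_in := Net.arcs_card_in hphylo hm
  have s_out := Net.sum_verts_split (N := N) N.outdeg
  have s_in := Net.sum_verts_split (N := N) N.indeg
  have l_out := Net.sum_leaves_out hphylo hm
  have r_out := Net.sum_retics_out hphylo hm
  have t_out := Net.sum_TT_out hphylo hm
  have l_in := Net.sum_leaves_in hphylo hm
  have r_in := Net.sum_retics_in hphylo hm
  have t_in := Net.sum_TT_in hphylo hm
  have hr := Net.retics_le hphylo hm hrv
  omega
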